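/- Let M ∈ ℝ^{m×n} be a rank-r matrix, δ > 0, δ₀ = δ/6, Ω ⊆ [m]×[n] nonempty with p = |Ω|/(mn), and ρ = 8·p·δ₀² in the definition of F̃. Assume Ω satisfies the RSC property at level δ: (1/3)·p·‖M − XYᵀ‖_F² ≤ ‖P_Ω(M − XYᵀ)‖_F² ≤ 2·p·‖M − XYᵀ‖_F² for all (X,Y) ∈ K₁ ∩ K₂ ∩ K(δ). Let x_t = (X_t, Y_t), t = 0, 1, 2, …, be a sequence of pairs with x₀ ∈ (√(2/3)·K₁) ∩ (√(2/3)·K₂) ∩ K(δ₀). Write Δ_t = x_{t+1} − x_t (componentwise difference) and d(x, u) := ‖XYᵀ − UVᵀ‖_F for x = (X,Y), u = (U,V). Suppose the sequence satisfies at least one of the following three conditions for all t: (1) F̃(x_t + λ·Δ_t) ≤ 2·F̃(x₀) for every λ ∈ [0,1]; (2) there exists a convex function ψ_t : ℝ → ℝ with ψ_t(λ) ≥ F̃(x_t + λ·Δ_t) for all λ ∈ ℝ, ψ_t(0) = F̃(x_t), and λ = 1 is a global minimizer of ψ_t over ℝ; (3) F̃(x_t) ≤ 2·F̃(x₀) and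 d(x_t, x₀) ≤ (5/6)·δ. Then x_t ∈ K₁ ∩ K₂ ∩ K(2δ/3) for all t ≥ 0. -/

import Mathlib

open Matrix
open scoped Classical

noncomputable section

/-- Frobenius norm of a real matrix. -/
def frob {m n : ℕ} (A : Matrix (Fin m) (Fin n) ℝ) : ℝ :=
  Real.sqrt (∑ i, ∑ j, A i j ^ 2)

/-- Euclidean norm of the `i`-th row of a matrix. -/
def rowNorm {m n : ℕ} (A : Matrix (Fin m) (Fin n) ℝ) (i : Fin m) : ℝ :=
  Real.sqrt (∑ j, A i j ^ 2)

/-- Frobenius inner product `⟨A,B⟩ = trace(AᵀB)`. -/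
def finner {m n : ℕ} (A B : Matrix (Fin m) (Fin n) ℝ) : ℝ :=
  ∑ i, ∑ j, A i j * B i j

/-- Projection onto the set of entries indexed by `Ω` (other entries are set to `0`). -/
def projOmega {m n : ℕ} (Ω : Finset (Fin m × Fin n)) (A : Matrix (Fin m) (Fin n) ℝ) :
    Matrix (Fin m) (Fin n) ℝ :=
  Matrix.of fun i j => if (i, j) ∈ Ω then A i j else 0

/-- `G₀(z) = (max{0, z-1})²`. -/
def G0 (z : ℝ) : ℝ := max 0 (z - 1) ^ 2

/-- `G₀′(z) = 2·max{0, z-1}`. -/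
def G0' (z : ℝ) : ℝ := 2 * max 0 (z - 1)

/-- The matrix whose `i`-th row is the `i`-th row of `A` and whose other rows vanish. -/
def rowMat {m n : ℕ} (A : Matrix (Fin m) (Fin n) ℝ) (i : Fin m) :
    Matrix (Fin m) (Fin n) ℝ :=
  Matrix.of fun i' j => if i' = i then A i j else 0

/-- The regularizer `G(X,Y)`. -/
def Greg {m n r : ℕ} (ρ β1 β2 βT : ℝ) (X : Matrix (Fin m) (Fin r) ℝ)
    (Y : Matrix (Fin n) (Fin r) ℝ) : ℝ :=
  ρ * ∑ i, G0 (3 * rowNorm X i ^ 2 / (2 * β1 ^ 2)) +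
    ρ * ∑ j, G0 (3 * rowNorm Y j ^ 2 / (2 * β2 ^ 2)) +
    ρ * G0 (3 * frob X ^ 2 / (2 * βT ^ 2)) +
    ρ * G0 (3 * frob Y ^ 2 / (2 * βT ^ 2))

/-- The regularized objective `F̃(X,Y)`. -/
def Ftilde {m n r : ℕ} (Ω : Finset (Fin m × Fin n)) (M : Matrix (Fin m) (Fin n) ℝ)
    (ρ β1 β2 βT : ℝ) (X : Matrix (Fin m) (Fin r) ℝ) (Y : Matrix (Fin n) (Fin r) ℝ) : ℝ :=
  (1 / 2) * frob (projOmega Ω (M - X * Yᵀ)) ^ 2 + Greg ρ β1 β2 βT X Y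

/-- Gradient of the regularizer with respect to one of the factors. -/
def gradG1 {m r : ℕ} (ρ β βT : ℝ) (X : Matrix (Fin m) (Fin r) ℝ) :
    Matrix (Fin m) (Fin r) ℝ :=
  (∑ i, (ρ * G0' (3 * rowNorm X i ^ 2 / (2 * β ^ 2)) * (3 / β ^ 2)) • rowMat X i) +
    (ρ * G0' (3 * frob X ^ 2 / (2 * βT ^ 2)) * (3 / βT ^ 2)) • X

/-- `∇_X F̃(X,Y)`. -/
def gradX {m n r : ℕ} (Ω : Finset (Fin m × Fin n)) (M : Matrix (Fin m) (Fin n) ℝ)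
    (ρ β1 βT : ℝ) (X : Matrix (Fin m) (Fin r) ℝ) (Y : Matrix (Fin n) (Fin r) ℝ) :
    Matrix (Fin m) (Fin r) ℝ :=
  projOmega Ω (X * Yᵀ - M) * Y + gradG1 ρ β1 βT X

/-- `∇_Y F̃(X,Y)`. -/
def gradY {m n r : ℕ} (Ω : Finset (Fin m × Fin n)) (M : Matrix (Fin m) (Fin n) ℝ)
    (ρ β2 βT : ℝ) (X : Matrix (Fin m) (Fin r) ℝ) (Y : Matrix (Fin n) (Fin r) ℝ) :
    Matrix (Fin n) (Fin r) ℝ :=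
  (projOmega Ω (X * Yᵀ - M))ᵀ * X + gradG1 ρ β2 βT Y

/-- Membership in `K₁`. -/
def K1mem {m n r : ℕ} (β1 β2 : ℝ) (X : Matrix (Fin m) (Fin r) ℝ)
    (Y : Matrix (Fin n) (Fin r) ℝ) : Prop :=
  (∀ i, rowNorm X i ≤ β1) ∧ ∀ j, rowNorm Y j ≤ β2

/-- Membership in `K₂`. -/
def K2mem {m n r : ℕ} (βT : ℝ) (X : Matrix (Fin m) (Fin r) ℝ)
    (Y : Matrix (Fin n) (Fin r) ℝ) : Prop :=
  frob X ≤ βT ∧ frob Y ≤ βT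

/-- Membership in `K(t) = {(X,Y) : ‖M - XYᵀ‖_F ≤ t}`. -/
def Kmem {m n r : ℕ} (M : Matrix (Fin m) (Fin n) ℝ) (t : ℝ)
    (X : Matrix (Fin m) (Fin r) ℝ) (Y : Matrix (Fin n) (Fin r) ℝ) : Prop :=
  frob (M - X * Yᵀ) ≤ t


lemma frob_nonneg' {m n : ℕ} (A : Matrix (Fin m) (Fin n) ℝ) : 0 ≤ frob A :=
  Real.sqrt_nonneg _

lemma rowNorm_nonneg' {m n : ℕ} (A : Matrix (Fin m) (Fin n) ℝ) (i : Fin m) :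
    0 ≤ rowNorm A i := Real.sqrt_nonneg _

lemma G0_nonneg' (z : ℝ) : 0 ≤ G0 z := sq_nonneg _

lemma G0_eq_zero' {z : ℝ} (h : z ≤ 1) : G0 z = 0 := by
  unfold G0
  rw [max_eq_left (by linarith)]
  norm_num

lemma G0_quarter' {z : ℝ} (h : G0 z ≤ 1 / 4) : z ≤ 3 / 2 := by
  unfold G0 at h
  have h1 : (0:ℝ) ≤ max 0 (z - 1) := le_max_left _ _
  have h2 : z - 1 ≤ max 0 (z - 1) := le_max_right _ _
  nlinarith

lemma le_of_sq_le_sq' {a b : ℝ} (h : a ^ 2 ≤ b ^ 2) (ha : 0 ≤ a) (hb : 0 ≤ b) :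
    a ≤ b := by nlinarith

lemma frob_eq_norm' {m n : ℕ} (A : Matrix (Fin m) (Fin n) ℝ) :
    frob A = ‖(show EuclideanSpace ℝ (Fin m × Fin n) from WithLp.toLp 2 fun p => A p.1 p.2)‖ := by
  rw [EuclideanSpace.norm_eq, Fintype.sum_prod_type]
  unfold frob
  congr 1
  refine Finset.sum_congr rfl fun i _ => Finset.sum_congr rfl fun j _ => ?_
  rw [Real.norm_eq_abs, sq_abs]

lemma frob_triangle' {m n : ℕ} (A B : Matrix (Fin m) (Fin n) ℝ) :
    frob (A + B) ≤ frob A + frob B := by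
  rw [frob_eq_norm' A, frob_eq_norm' B, frob_eq_norm' (A + B)]
  have h : (show EuclideanSpace ℝ (Fin m × Fin n) from WithLp.toLp 2 fun p => (A + B) p.1 p.2) =
      (show EuclideanSpace ℝ (Fin m × Fin n) from WithLp.toLp 2 fun p => A p.1 p.2) +
      (show EuclideanSpace ℝ (Fin m × Fin n) from WithLp.toLp 2 fun p => B p.1 p.2) := by
    ext p
    simp [Matrix.add_apply]
  rw [h]
  exact norm_add_le _ _

lemma frob_sub_comm' {m n : ℕ} (A B : Matrix (Fin m) (Fin n) ℝ) :
    frob (A - B) = frob (B - A) := by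
  unfold frob
  congr 1
  refine Finset.sum_congr rfl fun i _ => Finset.sum_congr rfl fun j _ => ?_
  rw [Matrix.sub_apply, Matrix.sub_apply]
  ring

lemma frob_path_continuous' {m n r : ℕ} (M : Matrix (Fin m) (Fin n) ℝ)
    (X DX : Matrix (Fin m) (Fin r) ℝ) (Y DY : Matrix (Fin n) (Fin r) ℝ) :
    Continuous (fun lam : ℝ => frob (M - (X + lam • DX) * (Y + lam • DY)ᵀ)) := by
  unfold frob
  apply Real.continuous_sqrt.comp
  apply continuous_finset_sum
  intro i _
  apply continuous_finset_sum
  intro j _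
  simp only [Matrix.sub_apply, Matrix.mul_apply, Matrix.transpose_apply, Matrix.add_apply,
    Matrix.smul_apply, smul_eq_mul]
  apply Continuous.pow
  apply Continuous.sub continuous_const
  apply continuous_finset_sum
  intro k _
  exact (continuous_const.add (continuous_id.mul continuous_const)).mul
    (continuous_const.add (continuous_id.mul continuous_const))


lemma sc_mul_le {s c β : ℝ} (h : s ≤ c * β) (hs : 0 ≤ s) (hc : c ≤ 1) (hβ : 0 < β) :
    s ≤ β := by nlinarith

lemma sc_sq_le {b d : ℝ} (h : b ≤ d) (hb : 0 ≤ b) : b ^ 2 ≤ d ^ 2 := by nlinarith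

lemma sc_half {a b p d : ℝ} (hp : 0 < p) (hup : a ^ 2 ≤ 2 * p * b ^ 2)
    (hfd : b ^ 2 ≤ d ^ 2) : 1 / 2 * a ^ 2 ≤ p * d ^ 2 := by nlinarith

lemma sc_twelve {p f2 pr d : ℝ} (hp : 0 < p) (hlow : 1 / 3 * p * f2 ≤ pr)
    (hproj : pr ≤ 4 * p * d ^ 2) : f2 ≤ 12 * d ^ 2 := by nlinarith

lemma sc_final {f2 δ : ℝ} (h : f2 ≤ 12 * (δ / 6) ^ 2) (hδ : 0 ≤ δ) :
    f2 ≤ (2 * δ / 3) ^ 2 := by nlinarith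


lemma sc_ext {ρ z : ℝ} (hρ0 : 0 < ρ) (hz : ρ * z ≤ ρ / 4) : z ≤ 1 / 4 := by
  have := (mul_le_mul_iff_right₀ hρ0).mp (by linarith : ρ * z ≤ ρ * (1 / 4))
  linarith

lemma sc_fin {s β : ℝ} (hs : 0 ≤ s) (hβ : 0 < β)
    (h : 3 * s ^ 2 / (2 * β ^ 2) ≤ 3 / 2) : s ≤ β := by
  have hb : (0:ℝ) < 2 * β ^ 2 := by positivity
  rw [div_le_iff₀ hb] at h
  nlinarith

lemma sc_proj {a ρ c : ℝ} (h : 1 / 2 * a ^ 2 ≤ ρ / 4) (he : ρ / 2 = c) :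
    a ^ 2 ≤ c := by linarith

lemma sc_sqrt_le_one : Real.sqrt (2/3:ℝ) ≤ 1 := by
  nlinarith [Real.sqrt_nonneg (2/3:ℝ), Real.sq_sqrt (by norm_num : (0:ℝ) ≤ 2/3)]

lemma sc_G0zero {s β : ℝ} (hs : 0 ≤ s) (hβ : 0 < β)
    (h : s ≤ Real.sqrt (2/3) * β) : G0 (3 * s ^ 2 / (2 * β ^ 2)) = 0 := by
  have hc : Real.sqrt (2/3:ℝ) ^ 2 = 2/3 := Real.sq_sqrt (by norm_num)
  apply G0_eq_zero'
  have hsb : s ^ 2 ≤ 2/3 * β ^ 2 := by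
    nlinarith [Real.sqrt_nonneg (2/3:ℝ), mul_nonneg (Real.sqrt_nonneg (2/3:ℝ)) hβ.le]
  rw [div_le_one (by positivity)]
  linarith

lemma keyA_core {ρ q S1 S2 g1 g2 : ℝ} (hρ0 : 0 < ρ) (hq : 0 ≤ q) (hS1 : 0 ≤ S1)
    (hS2 : 0 ≤ S2) (hg1 : 0 ≤ g1) (hg2 : 0 ≤ g2)
    (hF : q + (ρ * S1 + ρ * S2 + ρ * g1 + ρ * g2) ≤ ρ / 4) :
    ρ * S1 ≤ ρ / 4 ∧ ρ * S2 ≤ ρ / 4 ∧ ρ * g1 ≤ ρ / 4 ∧ ρ * g2 ≤ ρ / 4 ∧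
      q ≤ ρ / 4 := by
  have h1 : 0 ≤ ρ * S1 := mul_nonneg hρ0.le hS1
  have h2 : 0 ≤ ρ * S2 := mul_nonneg hρ0.le hS2
  have h3 : 0 ≤ ρ * g1 := mul_nonneg hρ0.le hg1
  have h4 : 0 ≤ ρ * g2 := mul_nonneg hρ0.le hg2
  exact ⟨by linarith, by linarith, by linarith, by linarith, by linarith⟩

/-- **Proposition: conditions keeping the iterates in `K₁ ∩ K₂ ∩ K(2δ/3)`.** -/
theorem stmt15 (m n r : ℕ) (hm : 1 ≤ m) (hn : 1 ≤ n) (hr : 1 ≤ r)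
    (M : Matrix (Fin m) (Fin n) ℝ) (hrank : M.rank = r)
    (δ δ0 : ℝ) (hδ : 0 < δ) (hδ0 : δ0 = δ / 6)
    (Ω : Finset (Fin m × Fin n)) (hΩ : Ω.Nonempty)
    (p : ℝ) (hp : p = (Ω.card : ℝ) / (m * n))
    (βT β1 β2 : ℝ) (hβT : 0 < βT) (hβ1 : 0 < β1) (hβ2 : 0 < β2)
    (ρ : ℝ) (hρ : ρ = 8 * p * δ0 ^ 2)
    (hRSC : ∀ (X : Matrix (Fin m) (Fin r) ℝ) (Y : Matrix (Fin n) (Fin r) ℝ),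
      K1mem β1 β2 X Y → K2mem βT X Y → Kmem M δ X Y →
      1 / 3 * p * frob (M - X * Yᵀ) ^ 2 ≤ frob (projOmega Ω (M - X * Yᵀ)) ^ 2 ∧
        frob (projOmega Ω (M - X * Yᵀ)) ^ 2 ≤ 2 * p * frob (M - X * Yᵀ) ^ 2)
    (Xs : ℕ → Matrix (Fin m) (Fin r) ℝ) (Ys : ℕ → Matrix (Fin n) (Fin r) ℝ)
    (h0K1 : K1mem (Real.sqrt (2 / 3) * β1) (Real.sqrt (2 / 3) * β2) (Xs 0) (Ys 0))
    (h0K2 : K2mem (Real.sqrt (2 / 3) * βT) (Xs 0) (Ys 0))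
    (h0K : Kmem M δ0 (Xs 0) (Ys 0))
    (hcond :
      (∀ t : ℕ, ∀ lam ∈ Set.Icc (0 : ℝ) 1,
          Ftilde Ω M ρ β1 β2 βT (Xs t + lam • (Xs (t + 1) - Xs t))
              (Ys t + lam • (Ys (t + 1) - Ys t)) ≤
            2 * Ftilde Ω M ρ β1 β2 βT (Xs 0) (Ys 0)) ∨
      (∀ t : ℕ, ∃ ψ : ℝ → ℝ, ConvexOn ℝ Set.univ ψ ∧
          (∀ lam : ℝ,
            Ftilde Ω M ρ β1 β2 βT (Xs t + lam • (Xs (t + 1) - Xs t))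
                (Ys t + lam • (Ys (t + 1) - Ys t)) ≤ ψ lam) ∧
          ψ 0 = Ftilde Ω M ρ β1 β2 βT (Xs t) (Ys t) ∧
          (∀ lam : ℝ, ψ 1 ≤ ψ lam)) ∨
      (∀ t : ℕ,
          Ftilde Ω M ρ β1 β2 βT (Xs t) (Ys t) ≤
              2 * Ftilde Ω M ρ β1 β2 βT (Xs 0) (Ys 0) ∧
            frob (Xs t * (Ys t)ᵀ - Xs 0 * (Ys 0)ᵀ) ≤ 5 / 6 * δ)) :
    ∀ t : ℕ, K1mem β1 β2 (Xs t) (Ys t) ∧ K2mem βT (Xs t) (Ys t) ∧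
      Kmem M (2 * δ / 3) (Xs t) (Ys t) := by
  have hδ00 : 0 < δ0 := by rw [hδ0]; linarith only [hδ]
  have hp0 : 0 < p := by
    rw [hp]
    apply div_pos
    · exact_mod_cast Finset.card_pos.mpr hΩ
    · have h1 : (0:ℝ) < m := by exact_mod_cast hm
      have h2 : (0:ℝ) < n := by exact_mod_cast hn
      positivity
  have hρ0 : 0 < ρ := by
    rw [hρ]; exact mul_pos (mul_pos (by norm_num) hp0) (pow_pos hδ00 2)
  have hpδ : 0 ≤ p * δ0 ^ 2 := (mul_pos hp0 (pow_pos hδ00 2)).le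
  obtain ⟨h0X, h0Y⟩ := h0K1
  obtain ⟨h0XF, h0YF⟩ := h0K2
  have h0f : frob (M - Xs 0 * (Ys 0)ᵀ) ≤ δ0 := h0K
  have h0K1' : K1mem β1 β2 (Xs 0) (Ys 0) :=
    ⟨fun i => sc_mul_le (h0X i) (rowNorm_nonneg' _ _) sc_sqrt_le_one hβ1,
     fun j => sc_mul_le (h0Y j) (rowNorm_nonneg' _ _) sc_sqrt_le_one hβ2⟩
  have h0K2' : K2mem βT (Xs 0) (Ys 0) :=
    ⟨sc_mul_le h0XF (frob_nonneg' _) sc_sqrt_le_one hβT,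
     sc_mul_le h0YF (frob_nonneg' _) sc_sqrt_le_one hβT⟩
  have hδ0δ : δ0 ≤ δ := by rw [hδ0]; linarith only [hδ]
  have h0Kδ : Kmem M δ (Xs 0) (Ys 0) := le_trans h0f hδ0δ
  have hGreg0 : Greg ρ β1 β2 βT (Xs 0) (Ys 0) = 0 := by
    unfold Greg
    rw [Finset.sum_eq_zero (fun i _ => sc_G0zero (rowNorm_nonneg' _ i) hβ1 (h0X i)),
        Finset.sum_eq_zero (fun j _ => sc_G0zero (rowNorm_nonneg' _ j) hβ2 (h0Y j)),
        sc_G0zero (frob_nonneg' _) hβT h0XF,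
        sc_G0zero (frob_nonneg' _) hβT h0YF]
    ring
  have hF0 : Ftilde Ω M ρ β1 β2 βT (Xs 0) (Ys 0) ≤ p * δ0 ^ 2 := by
    have hup := (hRSC (Xs 0) (Ys 0) h0K1' h0K2' h0Kδ).2
    have hfd : frob (M - Xs 0 * (Ys 0)ᵀ) ^ 2 ≤ δ0 ^ 2 :=
      sc_sq_le h0f (frob_nonneg' _)
    unfold Ftilde
    rw [hGreg0, add_zero]
    exact sc_half hp0 hup hfd
  have keyA : ∀ (X : Matrix (Fin m) (Fin r) ℝ) (Y : Matrix (Fin n) (Fin r) ℝ),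
      Ftilde Ω M ρ β1 β2 βT X Y ≤ 2 * p * δ0 ^ 2 →
      K1mem β1 β2 X Y ∧ K2mem βT X Y ∧
        frob (projOmega Ω (M - X * Yᵀ)) ^ 2 ≤ 4 * p * δ0 ^ 2 := by
    intro X Y hF
    have hρ4 : 2 * p * δ0 ^ 2 = ρ / 4 := by rw [hρ]; ring
    rw [hρ4] at hF
    unfold Ftilde Greg at hF
    have hq : 0 ≤ 1 / 2 * frob (projOmega Ω (M - X * Yᵀ)) ^ 2 := by positivity
    have hS1 : 0 ≤ ∑ i, G0 (3 * rowNorm X i ^ 2 / (2 * β1 ^ 2)) :=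
      Finset.sum_nonneg fun i _ => G0_nonneg' _
    have hS2 : 0 ≤ ∑ j, G0 (3 * rowNorm Y j ^ 2 / (2 * β2 ^ 2)) :=
      Finset.sum_nonneg fun j _ => G0_nonneg' _
    have hg1 : 0 ≤ G0 (3 * frob X ^ 2 / (2 * βT ^ 2)) := G0_nonneg' _
    have hg2 : 0 ≤ G0 (3 * frob Y ^ 2 / (2 * βT ^ 2)) := G0_nonneg' _
    obtain ⟨hb1, hb2, hb3, hb4, hb5⟩ := keyA_core hρ0 hq hS1 hS2 hg1 hg2 hF
    refine ⟨⟨fun i => ?_, fun j => ?_⟩, ⟨?_, ?_⟩, ?_⟩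
    · have hi : G0 (3 * rowNorm X i ^ 2 / (2 * β1 ^ 2)) ≤
          ∑ i', G0 (3 * rowNorm X i' ^ 2 / (2 * β1 ^ 2)) :=
        Finset.single_le_sum (f := fun i' => G0 (3 * rowNorm X i' ^ 2 / (2 * β1 ^ 2)))
          (fun _ _ => G0_nonneg' _) (Finset.mem_univ i)
      exact sc_fin (rowNorm_nonneg' _ _) hβ1 (G0_quarter' (sc_ext hρ0
        (le_trans (mul_le_mul_of_nonneg_left hi hρ0.le) hb1)))
    · have hj : G0 (3 * rowNorm Y j ^ 2 / (2 * β2 ^ 2)) ≤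
          ∑ j', G0 (3 * rowNorm Y j' ^ 2 / (2 * β2 ^ 2)) :=
        Finset.single_le_sum (f := fun j' => G0 (3 * rowNorm Y j' ^ 2 / (2 * β2 ^ 2)))
          (fun _ _ => G0_nonneg' _) (Finset.mem_univ j)
      exact sc_fin (rowNorm_nonneg' _ _) hβ2 (G0_quarter' (sc_ext hρ0
        (le_trans (mul_le_mul_of_nonneg_left hj hρ0.le) hb2)))
    · exact sc_fin (frob_nonneg' _) hβT (G0_quarter' (sc_ext hρ0 hb3))
    · exact sc_fin (frob_nonneg' _) hβT (G0_quarter' (sc_ext hρ0 hb4))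
    · exact sc_proj hb5 (by rw [hρ]; ring)
  have keyB : ∀ (X : Matrix (Fin m) (Fin r) ℝ) (Y : Matrix (Fin n) (Fin r) ℝ),
      Ftilde Ω M ρ β1 β2 βT X Y ≤ 2 * p * δ0 ^ 2 → frob (M - X * Yᵀ) ≤ δ →
      frob (M - X * Yᵀ) ≤ 2 * δ / 3 := by
    intro X Y hF hK
    obtain ⟨hK1, hK2, hproj⟩ := keyA X Y hF
    have hlow := (hRSC X Y hK1 hK2 hK).1
    have h12 : frob (M - X * Yᵀ) ^ 2 ≤ 12 * δ0 ^ 2 := sc_twelve hp0 hlow hproj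
    have hf2 : frob (M - X * Yᵀ) ^ 2 ≤ (2 * δ / 3) ^ 2 := by
      rw [hδ0] at h12
      exact sc_final h12 hδ.le
    exact le_of_sq_le_sq' hf2 (frob_nonneg' _) (by linarith only [hδ])
  have eq0X : ∀ t : ℕ, Xs t + (0:ℝ) • (Xs (t + 1) - Xs t) = Xs t := fun t => by
    rw [zero_smul, add_zero]
  have eq0Y : ∀ t : ℕ, Ys t + (0:ℝ) • (Ys (t + 1) - Ys t) = Ys t := fun t => by
    rw [zero_smul, add_zero]
  have eq1X : ∀ t : ℕ, Xs t + (1:ℝ) • (Xs (t + 1) - Xs t) = Xs (t + 1) := fun t => by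
    rw [one_smul]; abel
  have eq1Y : ∀ t : ℕ, Ys t + (1:ℝ) • (Ys (t + 1) - Ys t) = Ys (t + 1) := fun t => by
    rw [one_smul]; abel
  have main : (∀ t : ℕ, ∀ lam ∈ Set.Icc (0:ℝ) 1,
        Ftilde Ω M ρ β1 β2 βT (Xs t + lam • (Xs (t + 1) - Xs t))
          (Ys t + lam • (Ys (t + 1) - Ys t)) ≤ 2 * p * δ0 ^ 2) →
      ∀ t : ℕ, K1mem β1 β2 (Xs t) (Ys t) ∧ K2mem βT (Xs t) (Ys t) ∧
        Kmem M (2 * δ / 3) (Xs t) (Ys t) := by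
    intro h1
    have hFt : ∀ t, Ftilde Ω M ρ β1 β2 βT (Xs t) (Ys t) ≤ 2 * p * δ0 ^ 2 := by
      intro t
      have := h1 t 0 ⟨le_refl 0, zero_le_one⟩
      rwa [eq0X t, eq0Y t] at this
    have hKt : ∀ t, frob (M - Xs t * (Ys t)ᵀ) ≤ 2 * δ / 3 := by
      intro t
      induction t with
      | zero =>
        calc frob (M - Xs 0 * (Ys 0)ᵀ) ≤ δ0 := h0f
          _ ≤ 2 * δ / 3 := by rw [hδ0]; linarith only [hδ]
      | succ t ih =>
        by_contra hcon
        push_neg at hcon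
        set f : ℝ → ℝ := fun lam =>
          frob (M - (Xs t + lam • (Xs (t + 1) - Xs t)) *
            (Ys t + lam • (Ys (t + 1) - Ys t))ᵀ) with hfdef
        have hcont : Continuous f := frob_path_continuous' M _ _ _ _
        have hf0 : f 0 = frob (M - Xs t * (Ys t)ᵀ) := by
          have h : f 0 = frob (M - (Xs t + (0:ℝ) • (Xs (t + 1) - Xs t)) *
              (Ys t + (0:ℝ) • (Ys (t + 1) - Ys t))ᵀ) := rfl
          rw [h, eq0X t, eq0Y t]
        have hf1 : f 1 = frob (M - Xs (t + 1) * (Ys (t + 1))ᵀ) := by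
          have h : f 1 = frob (M - (Xs t + (1:ℝ) • (Xs (t + 1) - Xs t)) *
              (Ys t + (1:ℝ) • (Ys (t + 1) - Ys t))ᵀ) := rfl
          rw [h, eq1X t, eq1Y t]
        have hu : IsOpen {x : ℝ | f x < δ} := isOpen_lt hcont continuous_const
        have hv : IsOpen {x : ℝ | 2 * δ / 3 < f x} := isOpen_lt continuous_const hcont
        have hsub : Set.Icc (0:ℝ) 1 ⊆ {x | f x < δ} ∪ {x | 2 * δ / 3 < f x} := by
          intro x _
          rcases lt_or_ge (f x) δ with h | h
          · exact Or.inl h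
          · exact Or.inr (by
              simp only [Set.mem_setOf_eq]
              linarith only [h, hδ])
        have hne1 : (Set.Icc (0:ℝ) 1 ∩ {x | f x < δ}).Nonempty :=
          ⟨0, ⟨le_refl 0, zero_le_one⟩, by
            simp only [Set.mem_setOf_eq]
            rw [hf0]
            linarith only [ih, hδ]⟩
        have hne2 : (Set.Icc (0:ℝ) 1 ∩ {x | 2 * δ / 3 < f x}).Nonempty :=
          ⟨1, ⟨zero_le_one, le_refl 1⟩, by
            simp only [Set.mem_setOf_eq]
            rw [hf1]
            exact hcon⟩
        obtain ⟨lam, hlamI, hlamu, hlamv⟩ := isPreconnected_Icc _ _ hu hv hsub hne1 hne2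
        have hless : f lam < δ := hlamu
        have hle : f lam ≤ 2 * δ / 3 := keyB _ _ (h1 t lam hlamI) hless.le
        have hgt : 2 * δ / 3 < f lam := hlamv
        linarith only [hle, hgt]
    intro t
    obtain ⟨hK1, hK2, hproj⟩ := keyA _ _ (hFt t)
    exact ⟨hK1, hK2, hKt t⟩
  rcases hcond with h1 | h2 | h3
  · exact main fun t lam hlam =>
      le_trans (h1 t lam hlam) (by linarith only [hF0])
  · have hdec : ∀ t, Ftilde Ω M ρ β1 β2 βT (Xs t) (Ys t) ≤
        Ftilde Ω M ρ β1 β2 βT (Xs 0) (Ys 0) := by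
      intro t
      induction t with
      | zero => exact le_refl _
      | succ t ih =>
        obtain ⟨ψ, hconv, hψle, hψ0, hψmin⟩ := h2 t
        have h1' := hψle 1
        rw [eq1X t, eq1Y t] at h1'
        calc Ftilde Ω M ρ β1 β2 βT (Xs (t + 1)) (Ys (t + 1)) ≤ ψ 1 := h1'
          _ ≤ ψ 0 := hψmin 0
          _ = Ftilde Ω M ρ β1 β2 βT (Xs t) (Ys t) := hψ0
          _ ≤ _ := ih
    apply main
    intro t lam hlam
    obtain ⟨ψ, hconv, hψle, hψ0, hψmin⟩ := h2 t
    have hψ10 : ψ 1 ≤ ψ 0 := hψmin 0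
    have harg : (1 - lam) • (0:ℝ) + lam • (1:ℝ) = lam := by simp
    have hcx := hconv.2 (Set.mem_univ (0:ℝ)) (Set.mem_univ (1:ℝ))
      (by linarith only [hlam.2] : (0:ℝ) ≤ 1 - lam) hlam.1 (by ring)
    rw [harg] at hcx
    simp only [smul_eq_mul] at hcx
    have hψlam : ψ lam ≤ ψ 0 := by
      have hmm := mul_nonneg hlam.1 (sub_nonneg.mpr hψ10)
      linarith only [hcx, hmm]
    calc Ftilde Ω M ρ β1 β2 βT (Xs t + lam • (Xs (t + 1) - Xs t))
          (Ys t + lam • (Ys (t + 1) - Ys t)) ≤ ψ lam := hψle lam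
      _ ≤ ψ 0 := hψlam
      _ = Ftilde Ω M ρ β1 β2 βT (Xs t) (Ys t) := hψ0
      _ ≤ Ftilde Ω M ρ β1 β2 βT (Xs 0) (Ys 0) := hdec t
      _ ≤ 2 * p * δ0 ^ 2 := by linarith only [hF0, hpδ]
  · intro t
    obtain ⟨hFb, hdist⟩ := h3 t
    have hFb' : Ftilde Ω M ρ β1 β2 βT (Xs t) (Ys t) ≤ 2 * p * δ0 ^ 2 :=
      le_trans hFb (by linarith only [hF0])
    obtain ⟨hK1, hK2, hproj⟩ := keyA _ _ hFb'
    have htri : frob (M - Xs t * (Ys t)ᵀ) ≤ δ := by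
      have hsplit : M - Xs t * (Ys t)ᵀ =
          (M - Xs 0 * (Ys 0)ᵀ) + (Xs 0 * (Ys 0)ᵀ - Xs t * (Ys t)ᵀ) := by abel
      have hcomm := frob_sub_comm' (Xs 0 * (Ys 0)ᵀ) (Xs t * (Ys t)ᵀ)
      calc frob (M - Xs t * (Ys t)ᵀ)
          = frob ((M - Xs 0 * (Ys 0)ᵀ) + (Xs 0 * (Ys 0)ᵀ - Xs t * (Ys t)ᵀ)) := by
            rw [← hsplit]
        _ ≤ frob (M - Xs 0 * (Ys 0)ᵀ) + frob (Xs 0 * (Ys 0)ᵀ - Xs t * (Ys t)ᵀ) :=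
            frob_triangle' _ _
        _ ≤ δ0 + 5 / 6 * δ := by rw [hcomm]; linarith only [h0f, hdist]
        _ ≤ δ := by rw [hδ0]; linarith only [hδ]
    exact ⟨hK1, hK2, keyB _ _ hFb' htri⟩

end
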